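/- Let G be a matching covered graph, ∂(X) a cut of G of even matching porosity, ∂(Z) a non-trivial tight cut of G, and let v_Z be the contraction vertex obtained by contracting Z into the graph G_Z. If |X ∩ Z| is odd, then the matching porosity in G_Z of the cut with shore (X∖Z) ∪ {v_Z} is at most the matching porosity of ∂(X) in G. -/

import Mathlib

open SimpleGraph

/-- A graph is matching covered if it is connected and every edge lies in a
perfect matching. -/
def MatchingCovered {V : Type*} (G : SimpleGraph V) : Prop :=
  G.Connected ∧ ∀ e ∈ G.edgeSet, ∃ M : G.Subgraph, M.IsPerfectMatching ∧ e ∈ M.edgeSet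

/-- The edge cut `∂(X)`: all edges of `G` with exactly one endpoint in `X`. -/
def cutEdges {V : Type*} (G : SimpleGraph V) (X : Set V) : Set (Sym2 V) :=
  {e | e ∈ G.edgeSet ∧ ∃ u v, e = s(u, v) ∧ u ∈ X ∧ v ∉ X}

/-- The matching porosity of the cut `∂(X)`: the maximum number of edges of a
perfect matching of `G` crossing the cut. -/
noncomputable def matchingPorosity {V : Type*} (G : SimpleGraph V) (X : Set V) : ℕ :=
  sSup {n | ∃ M : G.Subgraph, M.IsPerfectMatching ∧ n = (M.edgeSet ∩ cutEdges G X).ncard}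

/-- A cut is tight if every perfect matching contains exactly one of its edges. -/
def IsTightCut {V : Type*} (G : SimpleGraph V) (X : Set V) : Prop :=
  ∀ M : G.Subgraph, M.IsPerfectMatching → (M.edgeSet ∩ cutEdges G X).ncard = 1

/-- A tight cut is non-trivial if both shores have at least two vertices. -/
def IsNontrivialTightCut {V : Type*} (G : SimpleGraph V) (X : Set V) : Prop :=
  IsTightCut G X ∧ 2 ≤ X.ncard ∧ 2 ≤ Xᶜ.ncard

/-- `A`, `B` form a bipartition of `G` into its two colour classes. -/
def IsBipartitionOf {V : Type*} (G : SimpleGraph V) (A B : Set V) : Prop :=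
  A ∪ B = Set.univ ∧ Disjoint A B ∧
    ∀ ⦃u v⦄, G.Adj u v → (u ∈ A ∧ v ∈ B) ∨ (u ∈ B ∧ v ∈ A)

/-- A brace with colour classes `A` and `B`: a bipartite matching covered graph
without non-trivial tight cuts. -/
def IsBraceWith {V : Type*} (G : SimpleGraph V) (A B : Set V) : Prop :=
  MatchingCovered G ∧ IsBipartitionOf G A B ∧ ∀ X : Set V, ¬ IsNontrivialTightCut G X

instance optionFinite {α : Type*} [Finite α] : Finite (Option α) := by
  have := Fintype.ofFinite α
  infer_instance

/-- The tight cut contraction: identify the shore `Z` into a single contraction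
vertex (represented by `none`) and delete parallel edges and loops. -/
def contractShore {V : Type*} (G : SimpleGraph V) (Z : Set V) :
    SimpleGraph (Option {v : V // v ∉ Z}) :=
  SimpleGraph.fromRel fun a b =>
    match a, b with
    | some u, some w => G.Adj u w
    | some u, none => ∃ z ∈ Z, G.Adj u z
    | _, _ => False

/-! ### Auxiliary lemmas -/

lemma mem_cutEdges {V : Type*} (G : SimpleGraph V) (X : Set V) (a b : V) :
    s(a,b) ∈ cutEdges G X ↔ G.Adj a b ∧ ((a ∈ X ∧ b ∉ X) ∨ (b ∈ X ∧ a ∉ X)) := by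
  constructor
  · rintro ⟨he, u, v, huv, hu, hv⟩
    rw [Sym2.eq_iff] at huv
    refine ⟨G.mem_edgeSet.1 he, ?_⟩
    rcases huv with ⟨rfl, rfl⟩ | ⟨rfl, rfl⟩
    · exact Or.inl ⟨hu, hv⟩
    · exact Or.inr ⟨hu, hv⟩
  · rintro ⟨hadj, ⟨ha, hb⟩ | ⟨hb, ha⟩⟩
    · exact ⟨G.mem_edgeSet.2 hadj, a, b, rfl, ha, hb⟩
    · exact ⟨G.mem_edgeSet.2 hadj, b, a, Sym2.eq_swap, hb, ha⟩

lemma even_ncard_of_involution {α : Type*} :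
    ∀ (n : ℕ) (s : Set α), s.Finite → s.ncard = n → ∀ (f : α → α),
      (∀ v ∈ s, f v ∈ s) → (∀ v ∈ s, f (f v) = v) → (∀ v ∈ s, f v ≠ v) →
      ∃ k, n = 2 * k := by
  intro n
  induction n using Nat.strong_induction_on with
  | _ n ih =>
    intro s hfin hcard f hmaps hinv hne
    rcases s.eq_empty_or_nonempty with rfl | ⟨v, hv⟩
    · exact ⟨0, by simpa using hcard.symm⟩
    · have hfv : f v ∈ s := hmaps v hv
      have hvfv : v ≠ f v := (hne v hv).symm
      have hpair : ({v, f v} : Set α) ⊆ s := by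
        rintro x (rfl | rfl)
        exacts [hv, hfv]
      have hpc : ({v, f v} : Set α).ncard = 2 := Set.ncard_pair hvfv
      have hd : (s \ {v, f v}).ncard = n - 2 := by
        rw [Set.ncard_diff hpair, hpc, hcard]
      have hn2 : 2 ≤ n := by
        rw [← hcard, ← hpc]
        exact Set.ncard_le_ncard hpair hfin
      have hmaps' : ∀ w ∈ s \ {v, f v}, f w ∈ s \ {v, f v} := by
        rintro w ⟨hw, hw2⟩
        simp only [Set.mem_insert_iff, Set.mem_singleton_iff] at hw2
        push_neg at hw2
        refine ⟨hmaps w hw, ?_⟩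
        simp only [Set.mem_insert_iff, Set.mem_singleton_iff]
        push_neg
        constructor
        · intro h
          exact hw2.2 (by rw [← hinv w hw, h])
        · intro h
          apply hw2.1
          have := congrArg f h
          rwa [hinv w hw, hinv v hv] at this
      obtain ⟨k, hk⟩ := ih (n - 2) (by omega) (s \ {v, f v}) hfin.diff hd f hmaps'
        (fun w hw => hinv w hw.1) (fun w hw => hne w hw.1)
      exact ⟨k + 1, by omega⟩

lemma matching_cut_parity {V : Type*} [Finite V] (H : SimpleGraph V) (M : H.Subgraph)
    (hM : M.IsPerfectMatching) (X : Set V) :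
    ∃ k, X.ncard = (M.edgeSet ∩ cutEdges H X).ncard + 2 * k := by
  classical
  have hpart : ∀ v : V, ∃! w, M.Adj v w := fun v => hM.1 (hM.2 v)
  choose p hp hup using hpart
  have hpp : ∀ v, p (p v) = v := fun v => (hup (p v) v ((hp v).symm)).symm
  have hpne : ∀ v, p v ≠ v := fun v h => H.loopless.irrefl v (by have := M.adj_sub (hp v); rwa [h] at this)
  set A : Set V := {v | v ∈ X ∧ p v ∉ X} with hA
  set B : Set V := {v | v ∈ X ∧ p v ∈ X} with hB
  have hXAB : X = A ∪ B := by
    ext v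
    simp only [hA, hB, Set.mem_union, Set.mem_setOf_eq]
    tauto
  have hdisj : Disjoint A B := by
    rw [Set.disjoint_left]
    rintro v ⟨_, hv2⟩ ⟨_, hv4⟩
    exact hv2 hv4
  have hcardX : X.ncard = A.ncard + B.ncard := by
    rw [hXAB]
    exact Set.ncard_union_eq hdisj (Set.toFinite _) (Set.toFinite _)
  have himg : (fun v => s(v, p v)) '' A = M.edgeSet ∩ cutEdges H X := by
    ext e
    constructor
    · rintro ⟨v, ⟨hv1, hv2⟩, rfl⟩
      exact ⟨Subgraph.mem_edgeSet.2 (hp v),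
        (mem_cutEdges H X v (p v)).2 ⟨M.adj_sub (hp v), Or.inl ⟨hv1, hv2⟩⟩⟩
    · rintro ⟨he, hec⟩
      obtain ⟨-, u, v, rfl, hu, hv⟩ := hec
      have hadj : M.Adj u v := Subgraph.mem_edgeSet.1 he
      have hpv : p u = v := (hup u v hadj).symm
      exact ⟨u, ⟨hu, hpv ▸ hv⟩, by simp only []; rw [hpv]⟩
  have hinjA : Set.InjOn (fun v => s(v, p v)) A := by
    rintro v ⟨hv1, hv2⟩ w ⟨hw1, hw2⟩ h
    simp only [Sym2.eq_iff] at h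
    rcases h with ⟨h1, -⟩ | ⟨h1, h2⟩
    · exact h1
    · exact absurd (h1 ▸ hv1) hw2
  have hcardA : A.ncard = (M.edgeSet ∩ cutEdges H X).ncard := by
    rw [← himg, Set.ncard_image_of_injOn hinjA]
  have hmapsB : ∀ v ∈ B, p v ∈ B := by
    rintro v ⟨hv1, hv2⟩
    exact ⟨hv2, (hpp v).symm ▸ hv1⟩
  obtain ⟨k, hk⟩ := even_ncard_of_involution B.ncard B (Set.toFinite _) rfl p hmapsB
    (fun v _ => hpp v) (fun v _ => hpne v)
  exact ⟨k, by rw [hcardX, hcardA, hk]⟩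

lemma contractShore_adj_some_some {V : Type*} (G : SimpleGraph V) (Z : Set V)
    (a b : {v : V // v ∉ Z}) :
    (contractShore G Z).Adj (some a) (some b) ↔ G.Adj a.1 b.1 := by
  simp only [contractShore, fromRel_adj]
  constructor
  · rintro ⟨-, h | h⟩
    · exact h
    · exact h.symm
  · intro h
    refine ⟨fun hh => h.ne (congrArg Subtype.val (Option.some_injective _ hh)), Or.inl h⟩

lemma contractShore_adj_none_some {V : Type*} (G : SimpleGraph V) (Z : Set V)
    (u : {v : V // v ∉ Z}) :
    (contractShore G Z).Adj none (some u) ↔ ∃ z ∈ Z, G.Adj u.1 z := by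
  simp only [contractShore, fromRel_adj]
  constructor
  · rintro ⟨-, h | h⟩
    · exact h.elim
    · exact h
  · intro h
    exact ⟨by simp, Or.inr h⟩

/-- If `∂(X)` has even matching porosity, `∂(Z)` is a non-trivial tight cut and
`|X ∩ Z|` is odd, then in the tight cut contraction `G_Z` the cut with shore
`(X∖Z) ∪ {v_Z}` has matching porosity at most that of `∂(X)` in `G`. -/
theorem contraction_porosity_le {V : Type*} [Finite V] (G : SimpleGraph V)
    (hG : MatchingCovered G) (X Z : Set V)
    (hX : Even (matchingPorosity G X)) (hZ : IsNontrivialTightCut G Z)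
    (hodd : Odd (X ∩ Z).ncard) :
    matchingPorosity (contractShore G Z)
        {a : Option {v : V // v ∉ Z} | a = none ∨ ∃ u : {v : V // v ∉ Z}, a = some u ∧ u.1 ∈ X}
      ≤ matchingPorosity G X := by
  classical
  obtain ⟨hZt, hZ2, hZc2⟩ := hZ
  set W := {v : V // v ∉ Z} with hWdef
  set G' := contractShore G Z with hG'def
  set X' : Set (Option W) := {a : Option W | a = none ∨ ∃ u : W, a = some u ∧ u.1 ∈ X}
    with hX'def
  set S' := {n | ∃ M' : G'.Subgraph, M'.IsPerfectMatching ∧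
      n = (M'.edgeSet ∩ cutEdges G' X').ncard} with hS'def
  have hbdd : BddAbove {n | ∃ M : G.Subgraph, M.IsPerfectMatching ∧
      n = (M.edgeSet ∩ cutEdges G X).ncard} := by
    refine ⟨Nat.card (Sym2 V), ?_⟩
    rintro n ⟨M, -, rfl⟩
    calc (M.edgeSet ∩ cutEdges G X).ncard ≤ (Set.univ : Set (Sym2 V)).ncard :=
          Set.ncard_le_ncard (Set.subset_univ _) Set.finite_univ
      _ = Nat.card (Sym2 V) := Set.ncard_univ _
  have hgoal : matchingPorosity G' X' = sSup S' := rfl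
  -- cardinality facts about X'
  have hX'eq : X' = insert none (Option.some '' {w : W | w.1 ∈ X}) := by
    ext a
    simp only [hX'def, Set.mem_setOf_eq, Set.mem_insert_iff, Set.mem_image]
    constructor
    · rintro (rfl | ⟨w, rfl, hw⟩)
      · exact Or.inl rfl
      · exact Or.inr ⟨w, hw, rfl⟩
    · rintro (rfl | ⟨w, hw, rfl⟩)
      · exact Or.inl rfl
      · exact Or.inr ⟨w, rfl, hw⟩
  have hvalimg : Subtype.val '' {w : W | w.1 ∈ X} = X \ Z := by
    ext v
    simp only [Set.mem_image, Set.mem_setOf_eq, Set.mem_diff]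
    constructor
    · rintro ⟨w, hw, rfl⟩
      exact ⟨hw, w.2⟩
    · rintro ⟨h1, h2⟩
      exact ⟨⟨v, h2⟩, h1, rfl⟩
  have hX'card : X'.ncard = (X \ Z).ncard + 1 := by
    rw [hX'eq, Set.ncard_insert_of_notMem (by simp),
      Set.ncard_image_of_injective _ (Option.some_injective _), ← hvalimg,
      Set.ncard_image_of_injective _ Subtype.val_injective]
  have hXsplit : X.ncard = (X ∩ Z).ncard + (X \ Z).ncard := by
    rw [← Set.ncard_union_eq
      (Set.disjoint_of_subset_left Set.inter_subset_right Set.disjoint_sdiff_right)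
      (Set.toFinite _) (Set.toFinite _), Set.inter_union_diff]
  -- main bound
  have hmain : ∀ n ∈ S', n ≤ matchingPorosity G X := by
    rintro n ⟨M', hM', rfl⟩
    -- the partner of the contraction vertex
    obtain ⟨b0, hb0, hb0u⟩ := hM'.1 (hM'.2 (none : Option W))
    obtain ⟨u, rfl⟩ : ∃ u : W, b0 = some u := by
      cases b0 with
      | none => exact absurd (M'.adj_sub hb0) (G'.loopless.irrefl none)
      | some u => exact ⟨u, rfl⟩
    obtain ⟨z, hzZ, huz⟩ := (contractShore_adj_none_some G Z u).1 (M'.adj_sub hb0)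
    obtain ⟨M₀, hM₀, hM₀e⟩ := hG.2 s(u.1, z) (G.mem_edgeSet.2 huz)
    have hM₀uz : M₀.Adj u.1 z := Subgraph.mem_edgeSet.1 hM₀e
    have htight := hZt M₀ hM₀
    have hein : s(u.1, z) ∈ M₀.edgeSet ∩ cutEdges G Z :=
      ⟨hM₀e, (mem_cutEdges G Z u.1 z).2 ⟨huz, Or.inr ⟨hzZ, u.2⟩⟩⟩
    have hcrossuniq : ∀ e ∈ M₀.edgeSet ∩ cutEdges G Z, e = s(u.1, z) := by
      obtain ⟨a, ha⟩ := Set.ncard_eq_one.1 htight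
      intro e he
      rw [ha, Set.mem_singleton_iff] at he hein
      rw [he, ← hein]
    have hcross : ∀ a b : V, M₀.Adj a b → a ∉ Z → b ∈ Z → a = u.1 ∧ b = z := by
      intro a b hab haZ hbZ
      have h := hcrossuniq s(a,b) ⟨Subgraph.mem_edgeSet.2 hab,
        (mem_cutEdges G Z a b).2 ⟨M₀.adj_sub hab, Or.inr ⟨hbZ, haZ⟩⟩⟩
      rcases Sym2.eq_iff.1 h with ⟨rfl, rfl⟩ | ⟨rfl, rfl⟩
      · exact ⟨rfl, rfl⟩
      · exact absurd hzZ haZ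
    -- the lifted matching
    set M : G.Subgraph :=
      { verts := Set.univ
        Adj := fun a b => ((a ∈ Z ∨ b ∈ Z) ∧ M₀.Adj a b) ∨
          (∃ (ha : a ∉ Z) (hb : b ∉ Z), M'.Adj (some ⟨a, ha⟩) (some ⟨b, hb⟩))
        adj_sub := by
          rintro a b (⟨-, h⟩ | ⟨ha, hb, h⟩)
          · exact M₀.adj_sub h
          · exact (contractShore_adj_some_some G Z _ _).1 (M'.adj_sub h)
        edge_vert := fun _ => Set.mem_univ _
        symm := by
          constructor
          rintro a b (⟨hz, h⟩ | ⟨ha, hb, h⟩)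
          · exact Or.inl ⟨hz.symm, h.symm⟩
          · exact Or.inr ⟨hb, ha, h.symm⟩ } with hMdef
    have hMAdj : ∀ a b : V, M.Adj a b ↔ (((a ∈ Z ∨ b ∈ Z) ∧ M₀.Adj a b) ∨
        (∃ (ha : a ∉ Z) (hb : b ∉ Z), M'.Adj (some ⟨a, ha⟩) (some ⟨b, hb⟩))) :=
      fun a b => Iff.rfl
    have hu_none : ∀ y, M'.Adj (some u) y → y = none := by
      intro y hy
      obtain ⟨w, hw, hwu⟩ := hM'.1 (hM'.2 (some u))
      rw [hwu y hy, hwu none hb0.symm]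
    have hMpm : M.IsPerfectMatching := by
      refine ⟨?_, fun v => Set.mem_univ v⟩
      rintro v -
      by_cases hvZ : v ∈ Z
      · obtain ⟨w, hw, hwu⟩ := hM₀.1 (hM₀.2 v)
        refine ⟨w, Or.inl ⟨Or.inl hvZ, hw⟩, ?_⟩
        rintro y (⟨-, hy⟩ | ⟨hva, -, -⟩)
        · exact hwu y hy
        · exact absurd hvZ hva
      · obtain ⟨y, hy, hyu⟩ := hM'.1 (hM'.2 (some ⟨v, hvZ⟩))
        cases y with
        | some w =>
          refine ⟨w.1, Or.inr ⟨hvZ, w.2, hy⟩, ?_⟩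
          rintro y₂ (⟨hzc, hy₂⟩ | ⟨ha, hb, hy₂⟩)
          · obtain ⟨hvu, -⟩ := hcross v y₂ hy₂ hvZ (hzc.resolve_left hvZ)
            have hvu' : (⟨v, hvZ⟩ : W) = u := Subtype.ext hvu
            rw [hvu'] at hy
            exact absurd (hu_none _ hy) (by simp)
          · have h := hyu (some ⟨y₂, hb⟩) hy₂
            exact congrArg Subtype.val (Option.some_injective _ h)
        | none =>
          have hvu : (⟨v, hvZ⟩ : W) = u := Option.some_injective _ (hb0u _ hy.symm)
          have hvu' : v = u.1 := congrArg Subtype.val hvu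
          have hMvz : M₀.Adj v z := by rw [hvu']; exact hM₀uz
          refine ⟨z, Or.inl ⟨Or.inr hzZ, hMvz⟩, ?_⟩
          rintro y₂ (⟨-, hy₂⟩ | ⟨ha, hb, hy₂⟩)
          · obtain ⟨w₀, hw₀, hw₀u⟩ := hM₀.1 (hM₀.2 v)
            rw [hw₀u y₂ hy₂]
            exact (hw₀u z hMvz).symm
          · rw [show (⟨v, ha⟩ : W) = u from Subtype.ext hvu'] at hy₂
            exact absurd (hu_none _ hy₂) (by simp)
    -- counting
    set e₀ : Sym2 (Option W) := s(none, some u) with he₀def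
    set C := M.edgeSet ∩ cutEdges G X with hCdef
    set B' := M'.edgeSet ∩ cutEdges G' X' with hB'def
    have hginj : Function.Injective (fun o : Option W => o.elim z Subtype.val) := by
      rintro (_ | a) (_ | b) h <;> simp only [Option.elim] at h
      · rfl
      · exact absurd (h ▸ hzZ) b.2
      · exact absurd (h ▸ hzZ) a.2
      · exact congrArg some (Subtype.ext h)
    have hmapsub : Sym2.map (fun o : Option W => o.elim z Subtype.val) '' (B' \ {e₀}) ⊆ C := by
      rintro e ⟨e', ⟨⟨heM', hecut⟩, hene⟩, rfl⟩
      rw [Set.mem_singleton_iff] at hene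
      obtain ⟨-, a, b, rfl, haX, hbX⟩ := hecut
      have hbnone : b ≠ none := fun h => hbX (h ▸ Or.inl rfl)
      obtain ⟨b', rfl⟩ := Option.ne_none_iff_exists'.1 hbnone
      have hb'X : b'.1 ∉ X := fun h => hbX (Or.inr ⟨b', rfl, h⟩)
      rcases haX with rfl | ⟨a', rfl, ha'X⟩
      · exact absurd (hb0u _ (Subgraph.mem_edgeSet.1 heM')) (by
          intro h; exact hene (by rw [he₀def, h]))
      · have hadj' : M'.Adj (some a') (some b') := Subgraph.mem_edgeSet.1 heM'
        have hMab : M.Adj a'.1 b'.1 := Or.inr ⟨a'.2, b'.2, hadj'⟩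
        rw [Sym2.map_pair_eq]
        exact ⟨Subgraph.mem_edgeSet.2 hMab,
          (mem_cutEdges G X _ _).2 ⟨M.adj_sub hMab, Or.inl ⟨ha'X, hb'X⟩⟩⟩
    have hstep1 : B'.ncard ≤ (B' \ {e₀}).ncard + 1 := by
      by_cases he₀ : e₀ ∈ B'
      · rw [Set.ncard_diff_singleton_of_mem he₀]
        have h1 : 1 ≤ B'.ncard := (Set.ncard_pos (Set.toFinite _)).2 ⟨e₀, he₀⟩
        omega
      · rw [Set.diff_singleton_eq_self he₀]
        omega
    have hkm : B'.ncard ≤ C.ncard + 1 := by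
      have h2 : (B' \ {e₀}).ncard ≤ C.ncard := by
        rw [← Set.ncard_image_of_injective (B' \ {e₀}) (Sym2.map.injective hginj)]
        exact Set.ncard_le_ncard hmapsub (Set.toFinite _)
      omega
    obtain ⟨k₁, hk₁⟩ := matching_cut_parity G M hMpm X
    obtain ⟨k₂, hk₂⟩ := matching_cut_parity G' M' hM' X'
    rw [← hCdef] at hk₁
    rw [← hB'def] at hk₂
    have hmem : matchingPorosity G X ∈ {n | ∃ M : G.Subgraph, M.IsPerfectMatching ∧
        n = (M.edgeSet ∩ cutEdges G X).ncard} :=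
      Nat.sSup_mem ⟨C.ncard, M, hMpm, rfl⟩ hbdd
    obtain ⟨M₁, hM₁, hM₁e⟩ := hmem
    obtain ⟨k₃, hk₃⟩ := matching_cut_parity G M₁ hM₁ X
    obtain ⟨k₄, hk₄⟩ := hX
    obtain ⟨k₅, hk₅⟩ := hodd
    have hCle : C.ncard ≤ matchingPorosity G X := le_csSup hbdd ⟨M, hMpm, rfl⟩
    omega
  rcases Set.eq_empty_or_nonempty S' with hemp | hne
  · rw [hgoal, hemp, csSup_empty]
    exact bot_le
  · rw [hgoal]
    exact csSup_le hne hmain
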